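/- For every integer t ≥ 0 and all distinct indices i, j ∈ P_t, it holds that LF_{dist(i)}(i) ≠ LF_{dist(j)}(j). -/

import Mathlib

/-- 1-based access to the `i`-th character of `T`. -/
def idx (T : List ℕ) (i : ℕ) : ℕ := T.getD (i - 1) 0

/-- The suffix `T[i..n]` (1-based). -/
def sufx (T : List ℕ) (i : ℕ) : List ℕ := T.drop (i - 1)

/-- Occurrence positions of `P` in `T`: `Occ(T,P) = {i ∈ [1, n−|P|+1] : P = T[i..i+|P|−1]}`. -/
def OccF (T P : List ℕ) : Finset ℕ :=
  (Finset.Icc 1 (T.length - P.length + 1)).filter (fun i => P <+: T.drop (i - 1))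

/-- `children(P) = {Pc : c ∈ Σ, Pc is a substring of T}`. -/
def childrenSet (σ : ℕ) (T P : List ℕ) : Set (List ℕ) :=
  {Q | ∃ c ∈ Finset.Icc 1 σ, Q = P ++ [c] ∧ (P ++ [c]) <:+: T}

/-- Starting positions of the maximal runs of equal characters in `L[1..n]`. -/
def SstartSet (n : ℕ) (L : ℕ → ℕ) : Finset ℕ :=
  (Finset.Icc 1 n).filter (fun i => i = 1 ∨ L i ≠ L (i - 1))

/-- `rank(S, i) = |{j ∈ S : j ≤ i}|`. -/
def rankOf (S : Finset ℕ) (i : ℕ) : ℕ := (S.filter (fun j => j ≤ i)).card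

/-- `(c, p, q)` is an answer of the range distinct query `RD(S, b, e)`:
`c` occurs in `S[b..e]`, and `p`, `q` are the first and last occurrences of `c` in `[b,e]`. -/
def RDmem (S : ℕ → ℕ) (b e c p q : ℕ) : Prop :=
  p ∈ Finset.Icc b e ∧ S p = c ∧ (∀ i ∈ Finset.Icc b e, S i = c → p ≤ i) ∧
  q ∈ Finset.Icc b e ∧ S q = c ∧ (∀ i ∈ Finset.Icc b e, S i = c → i ≤ q)

/-- `[b,e]` is the suffix-tree interval of `P`: the positions `i ∈ [1,n]` whose suffix
`T[SA[i]..n]` has `P` as a prefix are exactly `{b,…,e}`. -/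
def isIntervalOf (n : ℕ) (T : List ℕ) (SA : ℕ → ℕ) (P : List ℕ) (b e : ℕ) : Prop :=
  1 ≤ b ∧ e ≤ n ∧ ∀ i ∈ Finset.Icc 1 n, (P <+: sufx T (SA i) ↔ i ∈ Finset.Icc b e)

/-- Length of the longest common prefix of two lists. -/
def lcpLen : List ℕ → List ℕ → ℕ
  | a :: as, b :: bs => if a = b then lcpLen as bs + 1 else 0
  | _, _ => 0

/-- `𝓛_t`: substrings of `T` of length `t` whose suffix-tree node is explicit. -/
def LsetD (σ t : ℕ) (T : List ℕ) : Set (List ℕ) :=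
  {P | P <:+: T ∧ P.length = t ∧ 2 ≤ (childrenSet σ T P).ncard}

/-- `K_t = ⋃_{P ∈ 𝓛_t} children(P)`. -/
def KsetD (σ t : ℕ) (T : List ℕ) : Set (List ℕ) :=
  {Q | ∃ P ∈ LsetD σ t T, Q ∈ childrenSet σ T P}

/-- `K'_t`: members of `K_t` that are not the last child of their parent, i.e. whose
interval has a right endpoint different from that of the parent's interval. -/
def KpsetD (σ n t : ℕ) (T : List ℕ) (SA : ℕ → ℕ) : Set (List ℕ) :=
  {Q | ∃ P ∈ LsetD σ t T, Q ∈ childrenSet σ T P ∧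
    ∃ b e b' e' : ℕ, isIntervalOf n T SA P b e ∧ isIntervalOf n T SA Q b' e' ∧ e' ≠ e}


theorem stmt8
    (σ n : ℕ) (T : List ℕ)
    (hn : 2 ≤ n) (hlen : T.length = n)
    (halpha : ∀ c ∈ T, c ∈ Finset.Icc 1 σ)
    (hocc : ∀ c ∈ Finset.Icc 1 σ, c ∈ T)
    (hdollar : ∀ i ∈ Finset.Icc 1 (n - 1), idx T i ≠ idx T n)
    (SA : ℕ → ℕ)
    (hSA_mem : ∀ i ∈ Finset.Icc 1 n, SA i ∈ Finset.Icc 1 n)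
    (hSA_surj : ∀ j ∈ Finset.Icc 1 n, ∃ i ∈ Finset.Icc 1 n, SA i = j)
    (hSA_sorted : ∀ i j, i ∈ Finset.Icc 1 n → j ∈ Finset.Icc 1 n → i < j →
      List.Lex (· < ·) (sufx T (SA i)) (sufx T (SA j)))
    (LF : ℕ → ℕ)
    (hLF_mem : ∀ i ∈ Finset.Icc 1 n, LF i ∈ Finset.Icc 1 n)
    (hLF : ∀ i ∈ Finset.Icc 1 n, SA i ≠ 1 → SA (LF i) = SA i - 1)
    (hLF1 : ∀ i ∈ Finset.Icc 1 n, SA i = 1 → SA (LF i) = n)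
    (L : ℕ → ℕ)
    (hL : ∀ i ∈ Finset.Icc 1 n, L i = idx T (SA (LF i)))
    (LCP : ℕ → ℕ)
    (hLCP1 : LCP 1 = 0)
    (hLCP : ∀ i ∈ Finset.Icc 2 n, LCP i = lcpLen (sufx T (SA (i - 1))) (sufx T (SA i)))
    (dist : ℕ → ℕ)
    (hdist_mem : ∀ i ∈ Finset.Icc 1 n, LF^[dist i] i ∈ SstartSet n L)
    (hdist_min : ∀ i ∈ Finset.Icc 1 n, ∀ x : ℕ, LF^[x] i ∈ SstartSet n L → dist i ≤ x)
 :
    ∀ t : ℕ, ∀ i ∈ Finset.Icc 2 n, ∀ j ∈ Finset.Icc 2 n,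
      LCP i = t → LCP j = t → i ≠ j → LF^[dist i] i ≠ LF^[dist j] j :=  by
  intro t
  -- basic unfolded memberships
  -- SA is injective on [1,n]
  have hSA_inj : ∀ i ∈ Finset.Icc 1 n, ∀ j ∈ Finset.Icc 1 n, SA i = SA j → i = j := by
    intro i hi j hj h
    by_contra hne
    rcases Nat.lt_or_ge i j with hlt | hge
    · have hx := hSA_sorted i j hi hj hlt
      rw [h] at hx
      exact (asymm hx) hx
    · have hlt : j < i := lt_of_le_of_ne hge (Ne.symm hne)
      have hx := hSA_sorted j i hj hi hlt
      rw [h] at hx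
      exact (asymm hx) hx
  -- comparison reversal
  have hrev : ∀ i ∈ Finset.Icc 1 n, ∀ j ∈ Finset.Icc 1 n,
      List.Lex (· < ·) (sufx T (SA i)) (sufx T (SA j)) → i < j := by
    intro i hi j hj h
    by_contra hle
    push_neg at hle
    rcases lt_or_eq_of_le hle with hlt | heq
    · exact (asymm h) (hSA_sorted j i hj hi hlt)
    · rw [heq] at h
      exact (asymm h) h
  -- LF is injective on [1,n]
  have hLF_inj : ∀ i ∈ Finset.Icc 1 n, ∀ j ∈ Finset.Icc 1 n, LF i = LF j → i = j := by
    intro i hi j hj h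
    apply hSA_inj i hi j hj
    have hi' := Finset.mem_Icc.1 (hSA_mem i hi)
    have hj' := Finset.mem_Icc.1 (hSA_mem j hj)
    by_cases h1 : SA i = 1
    · by_cases h2 : SA j = 1
      · rw [h1, h2]
      · have e1 := hLF1 i hi h1
        have e2 := hLF j hj h2
        rw [h] at e1
        omega
    · by_cases h2 : SA j = 1
      · have e1 := hLF i hi h1
        have e2 := hLF1 j hj h2
        rw [h] at e1
        omega
      · have e1 := hLF i hi h1
        have e2 := hLF j hj h2
        rw [h] at e1
        omega
  -- iterates stay in [1,n]
  have hiter_mem : ∀ x : ℕ, ∀ m ∈ Finset.Icc 1 n, LF^[x] m ∈ Finset.Icc 1 n := by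
    intro x
    induction x with
    | zero => intro m hm; simpa using hm
    | succ y ih =>
      intro m hm
      rw [Function.iterate_succ_apply']
      exact hLF_mem _ (ih m hm)
  -- iterates are injective on [1,n]
  have hiter_inj : ∀ x : ℕ, ∀ a ∈ Finset.Icc 1 n, ∀ b ∈ Finset.Icc 1 n,
      LF^[x] a = LF^[x] b → a = b := by
    intro x
    induction x with
    | zero => intro a _ b _ h; simpa using h
    | succ y ih =>
      intro a ha b hb h
      rw [Function.iterate_succ_apply', Function.iterate_succ_apply'] at h
      exact ih a ha b hb (hLF_inj _ (hiter_mem y a ha) _ (hiter_mem y b hb) h)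
  -- run interior characterization
  have hnotS : ∀ m ∈ Finset.Icc 1 n, m ∉ SstartSet n L → 2 ≤ m ∧ L m = L (m - 1) := by
    intro m hm hns
    simp only [SstartSet, Finset.mem_filter, not_and, not_or, not_not] at hns
    have h1 := hns hm
    have h2 := Finset.mem_Icc.1 hm
    exact ⟨by omega, h1.2⟩
  -- suffix decomposition
  have hsufx : ∀ p : ℕ, 1 ≤ p → p ≤ n → sufx T p = idx T p :: sufx T (p + 1) := by
    intro p h1 h2
    unfold sufx idx
    have hp : p - 1 < T.length := by omega
    rw [List.drop_eq_getElem_cons hp]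
    congr 1
    · rw [List.getD_eq_getElem?_getD, List.getElem?_eq_getElem hp]
      rfl
    · congr 1
      omega
  -- core lemma: inside a run, LF shifts by one and LCP grows by one
  have hcore : ∀ m ∈ Finset.Icc 2 n, L m = L (m - 1) →
      LF m = LF (m - 1) + 1 ∧ LCP (LF m) = LCP m + 1 := by
    intro m hm hLeq
    have hm2 := Finset.mem_Icc.1 hm
    have hmI : m ∈ Finset.Icc 1 n := Finset.mem_Icc.2 (by omega)
    have hm1I : m - 1 ∈ Finset.Icc 1 n := Finset.mem_Icc.2 (by omega)
    have hSAm := Finset.mem_Icc.1 (hSA_mem m hmI)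
    have hSAm1 := Finset.mem_Icc.1 (hSA_mem (m-1) hm1I)
    have hLFmI := hLF_mem m hmI
    have hLFm1I := hLF_mem (m-1) hm1I
    have hLFm := Finset.mem_Icc.1 hLFmI
    have hLFm1 := Finset.mem_Icc.1 hLFm1I
    have hmne : m - 1 ≠ m := by omega
    have hLFne : LF (m-1) ≠ LF m := fun h => hmne (hLF_inj _ hm1I _ hmI h)
    have hSALFne : SA (LF (m-1)) ≠ SA (LF m) :=
      fun h => hLFne (hSA_inj _ hLFm1I _ hLFmI h)
    have hSALFm := Finset.mem_Icc.1 (hSA_mem _ hLFmI)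
    have hSALFm1 := Finset.mem_Icc.1 (hSA_mem _ hLFm1I)
    have hL1 := hL m hmI
    have hL2 := hL (m-1) hm1I
    have hSAm_ne1 : SA m ≠ 1 := by
      intro h1
      have e1 := hLF1 m hmI h1
      have h3 : SA (LF (m-1)) ≠ n := fun h => hSALFne (by rw [h, e1])
      have h4 : SA (LF (m-1)) ∈ Finset.Icc 1 (n-1) := Finset.mem_Icc.2 (by omega)
      apply hdollar _ h4
      rw [← hL2, ← hLeq, hL1, e1]
    have hSAm1_ne1 : SA (m-1) ≠ 1 := by
      intro h1
      have e1 := hLF1 (m-1) hm1I h1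
      have h3 : SA (LF m) ≠ n := fun h => hSALFne (by rw [h, e1])
      have h4 : SA (LF m) ∈ Finset.Icc 1 (n-1) := Finset.mem_Icc.2 (by omega)
      apply hdollar _ h4
      rw [← hL1, hLeq, hL2, e1]
    have e1 := hLF m hmI hSAm_ne1
    have e2 := hLF (m-1) hm1I hSAm1_ne1
    have hcm : idx T (SA m - 1) = L m := by rw [hL1, e1]
    have hcm1 : idx T (SA (m-1) - 1) = L m := by rw [hLeq, hL2, e2]
    have hd1 : sufx T (SA (LF m)) = L m :: sufx T (SA m) := by
      rw [e1, hsufx _ (by omega) (by omega), hcm,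
        show SA m - 1 + 1 = SA m from by omega]
    have hd2 : sufx T (SA (LF (m-1))) = L m :: sufx T (SA (m-1)) := by
      rw [e2, hsufx _ (by omega) (by omega), hcm1,
        show SA (m-1) - 1 + 1 = SA (m-1) from by omega]
    have hord : List.Lex (· < ·) (sufx T (SA (m-1))) (sufx T (SA m)) :=
      hSA_sorted _ _ hm1I hmI (by omega)
    have hordLF : List.Lex (· < ·) (sufx T (SA (LF (m-1)))) (sufx T (SA (LF m))) := by
      rw [hd1, hd2]
      exact List.Lex.cons hord
    have hlt : LF (m-1) < LF m := hrev _ hLFm1I _ hLFmI hordLF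
    have hgap : LF m = LF (m-1) + 1 := by
      by_contra hne2
      set p := LF (m-1) + 1 with hp
      have hp1 : LF (m-1) < p := by omega
      have hp2 : p < LF m := by omega
      have hpI : p ∈ Finset.Icc 1 n := Finset.mem_Icc.2 (by omega)
      have hSApI := Finset.mem_Icc.1 (hSA_mem p hpI)
      have ho1 := hSA_sorted _ _ hLFm1I hpI hp1
      have ho2 := hSA_sorted _ _ hpI hLFmI hp2
      rw [hd2] at ho1
      rw [hd1] at ho2
      obtain ⟨z, Z', hZ⟩ : ∃ z Z', sufx T (SA p) = z :: Z' := by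
        cases hZ0 : sufx T (SA p) with
        | nil => rw [hZ0] at ho1; exact absurd ho1 List.not_lex_nil
        | cons z Z' => exact ⟨z, Z', rfl⟩
      rw [hZ] at ho1 ho2
      have hzc : z = L m := by
        cases ho1 with
        | cons _ => rfl
        | rel h1 =>
          cases ho2 with
          | cons _ => rfl
          | rel h2 => omega
      subst hzc
      have hSApn : SA p ≠ n := by
        intro hn'
        rw [hn', hsufx n (by omega) le_rfl] at hZ
        injection hZ with hh _
        have h4 : SA m - 1 ∈ Finset.Icc 1 (n-1) := Finset.mem_Icc.2 (by omega)
        exact hdollar _ h4 (hcm.trans hh.symm)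
      have hdec := hsufx (SA p) (by omega) (by omega)
      rw [hZ] at hdec
      injection hdec with hh ht
      obtain ⟨q, hqI, hq⟩ := hSA_surj (SA p + 1) (Finset.mem_Icc.2 (by omega))
      have hx : List.Lex (· < ·) (sufx T (SA (m-1))) Z' := List.lex_cons_iff.1 ho1
      have hy : List.Lex (· < ·) Z' (sufx T (SA m)) := List.lex_cons_iff.1 ho2
      rw [ht, ← hq] at hx hy
      have h5 : m - 1 < q := hrev _ hm1I _ hqI hx
      have h6 : q < m := hrev _ hqI _ hmI hy
      omega
    refine ⟨hgap, ?_⟩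
    have hLFm2 : LF m ∈ Finset.Icc 2 n := Finset.mem_Icc.2 (by omega)
    have h7 : LF m - 1 = LF (m-1) := by omega
    rw [hLCP (LF m) hLFm2, h7, hd1, hd2, hLCP m hm]
    simp [lcpLen]
  -- main argument, wlog dist i ≤ dist j
  suffices H : ∀ i ∈ Finset.Icc 2 n, ∀ j ∈ Finset.Icc 2 n, LCP i = t → LCP j = t → i ≠ j →
      dist i ≤ dist j → LF^[dist i] i ≠ LF^[dist j] j by
    intro i hi j hj hti htj hij
    rcases le_total (dist i) (dist j) with h | h
    · exact H i hi j hj hti htj hij h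
    · exact fun he => H j hj i hi htj hti hij.symm h he.symm
  intro i hi j hj hti htj hij hd heq
  have hi2 := Finset.mem_Icc.1 hi
  have hj2 := Finset.mem_Icc.1 hj
  have hiI : i ∈ Finset.Icc 1 n := Finset.mem_Icc.2 (by omega)
  have hjI : j ∈ Finset.Icc 1 n := Finset.mem_Icc.2 (by omega)
  set k := dist j - dist i with hkdef
  have hk : dist j = dist i + k := by omega
  have hkj : LF^[k] j ∈ Finset.Icc 1 n := hiter_mem k j hjI
  have hki : LF^[k] j = i := by
    apply hiter_inj (dist i) _ hkj _ hiI
    rw [← Function.iterate_add_apply, ← hk, ← heq]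
  have hclaim : ∀ x : ℕ, x ≤ k → LCP (LF^[x] j) = t + x ∧ LF^[x] j ∈ Finset.Icc 2 n := by
    intro x
    induction x with
    | zero => intro _; exact ⟨by simpa using htj, by simpa using hj⟩
    | succ y ih =>
      intro hxy
      obtain ⟨hLy, hMy⟩ := ih (by omega)
      have hmI : LF^[y] j ∈ Finset.Icc 1 n := hiter_mem y j hjI
      have hns : LF^[y] j ∉ SstartSet n L := by
        intro hs
        have := hdist_min j hjI y hs
        omega
      have hLeq := (hnotS _ hmI hns).2
      obtain ⟨hg, hl⟩ := hcore _ hMy hLeq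
      rw [Function.iterate_succ_apply']
      constructor
      · rw [hl, hLy]; omega
      · have ha := Finset.mem_Icc.1 (hLF_mem _ hmI)
        have hm2 := Finset.mem_Icc.1 hMy
        have hb := Finset.mem_Icc.1 (hLF_mem (LF^[y] j - 1)
          (Finset.mem_Icc.2 (by omega)))
        exact Finset.mem_Icc.2 (by omega)
  have hfin := (hclaim k le_rfl).1
  rw [hki, hti] at hfin
  have hk0 : k = 0 := by omega
  rw [hk0] at hki
  simp at hki
  exact hij hki.symm
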